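/- Normalization of ultimately periodic words in a DFA pair: given a complete DFA Q with m states and a complete DFA P with n states, and words x ∈ Σ*, y ∈ Σ⁺, there exist i with 0 ≤ i ≤ m and j with 1 ≤ j ≤ 2mn such that Q reaches the same state on x·y^i and on x·y^{i+j}, and P reaches the same state on y^j and on y^{2j}. -/

import Mathlib

open scoped Classical

/-- Concatenation of a finite word with an infinite word. -/
def wcat {A : Type} (u : List A) (w : ℕ → A) : ℕ → A :=
  fun n => if h : n < u.length then u.get ⟨n, h⟩ else w (n - u.length)

/-- The infinite periodic word `v^ω`. -/
def wpow {A : Type} [Inhabited A] (v : List A) : ℕ → A :=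
  fun n => v.getD (n % v.length) default

/-- The ultimately periodic word `u · v^ω`. -/
def upw {A : Type} [Inhabited A] (u v : List A) : ℕ → A := wcat u (wpow v)

/-- The finite word `v^i`. -/
def wrep {A : Type} (v : List A) (i : ℕ) : List A := (List.replicate i v).flatten

/-- The right congruence `x ∼_L y`. -/
def simL {A : Type} (L : Set (ℕ → A)) (x y : List A) : Prop :=
  ∀ w : ℕ → A, wcat x w ∈ L ↔ wcat y w ∈ L

/-- `w` is `u`-invariant: `u ∼_L u·w`. -/
def UInv {A : Type} (L : Set (ℕ → A)) (u w : List A) : Prop := simL L u (u ++ w)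

/-- `v` is relevant to `u`. -/
def URel {A : Type} (L : Set (ℕ → A)) (u v : List A) : Prop :=
  ∃ z : List A, UInv L u (v ++ z)

/-- `v` has natural color at most `c` wrt `u`. -/
def ColorAtMost {A : Type} [Inhabited A] (L : Set (ℕ → A)) (u : List A) :
    ℕ → List A → Prop
  | c, v => ∀ z : List A, UInv L u (v ++ z) →
      ((upw u (v ++ z) ∈ L ↔ Even c) ∨
        ∃ i : ℕ, 0 < i ∧ ∃ c' : Fin c, ColorAtMost L u c' (wrep (v ++ z) i))
  termination_by c => c
  decreasing_by exact c'.isLt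

/-- The natural color of the finite word `v` wrt `u`: `⊥` (i.e. `-∞`) if `v` is
irrelevant to `u`, and otherwise the minimal `c ≥ 0` as in the paper. -/
noncomputable def ncol {A : Type} [Inhabited A] (L : Set (ℕ → A)) (u v : List A) :
    WithBot ℕ :=
  if URel L u v then ((sInf {c : ℕ | ColorAtMost L u c v} : ℕ) : WithBot ℕ) else ⊥

/-- `v` is stable wrt `u`. -/
def Stable {A : Type} [Inhabited A] (L : Set (ℕ → A)) (u v : List A) : Prop :=
  ∀ i : ℕ, 0 < i → ncol L u v = ncol L u (wrep v i)

/-- `v` is `u`-reliable. -/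
def UReliable {A : Type} [Inhabited A] (L : Set (ℕ → A)) (u v : List A) : Prop :=
  UInv L u v ∧ Stable L u v

/-- The natural color of an ultimately periodic infinite word. -/
noncomputable def icol {A : Type} [Inhabited A] (L : Set (ℕ → A)) (w : ℕ → A) : ℕ :=
  sInf {c : ℕ | ∃ u v : List A, v ≠ [] ∧ w = upw u v ∧ UInv L u v ∧
    ncol L u v = (c : WithBot ℕ)}

/-- The set of states visited infinitely often by a run. -/
def infSet {Q : Type} (r : ℕ → Q) : Set Q := {q | ∀ n : ℕ, ∃ m : ℕ, n ≤ m ∧ r m = q}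

/-- The run of a complete deterministic automaton on an infinite word. -/
def runOf {A Q : Type} (δ : Q → A → Q) (q0 : Q) (w : ℕ → A) : ℕ → Q
  | 0 => q0
  | n + 1 => δ (runOf δ q0 w n) (w n)

/-- `L` is ω-regular: recognized by some deterministic Muller automaton. -/
def OmegaRegular {A : Type} (L : Set (ℕ → A)) : Prop :=
  ∃ (Q : Type) (_ : Fintype Q) (q0 : Q) (δ : Q → A → Q) (α : Set (Set Q)),
    ∀ w : ℕ → A, w ∈ L ↔ infSet (runOf δ q0 w) ∈ α


/-- The extended transition function of a complete deterministic automaton. -/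
def dstar {A Q : Type} (δ : Q → A → Q) (q : Q) (w : List A) : Q := w.foldl δ q

/-- `v` is `A`-persistent: `v` loops on the initial state, and from every state `q`,
some power of `v` loops on the state reached from `q` by `v`. -/
def APers {A Q : Type} (δ : Q → A → Q) (q0 : Q) (v : List A) : Prop :=
  dstar δ q0 v = q0 ∧
  ∀ q : Q, ∃ i : ℕ, 1 ≤ i ∧ dstar δ (dstar δ q v) (wrep v i) = dstar δ q v

lemma wrep_add' {A : Type} (y : List A) (u v : ℕ) :
    wrep y (u + v) = wrep y u ++ wrep y v := by
  unfold wrep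
  rw [List.replicate_add]
  exact List.flatten_append ..

lemma dstar_append' {A Q : Type} (δ : Q → A → Q) (q : Q) (u v : List A) :
    dstar δ q (u ++ v) = dstar δ (dstar δ q u) v :=
  List.foldl_append

lemma cyc_step {A Q : Type} (δ : Q → A → Q) (q0 : Q) (y : List A) (a p : ℕ)
    (h : dstar δ q0 (wrep y a) = dstar δ q0 (wrep y (a + p))) (t : ℕ) :
    dstar δ q0 (wrep y (a + t)) = dstar δ q0 (wrep y (a + t + p)) := by
  have e : a + t + p = (a + p) + t := by omega
  rw [e, wrep_add' y (a + p) t, dstar_append', ← h, ← dstar_append', ← wrep_add']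

lemma cyc_iter {A Q : Type} (δ : Q → A → Q) (q0 : Q) (y : List A) (a p : ℕ)
    (h : dstar δ q0 (wrep y a) = dstar δ q0 (wrep y (a + p))) (t s : ℕ) :
    dstar δ q0 (wrep y (a + t)) = dstar δ q0 (wrep y (a + t + s * p)) := by
  induction s with
  | zero => simp
  | succ s ih =>
    have e : a + t + (s + 1) * p = a + (t + s * p) + p := by ring
    rw [e, ← cyc_step δ q0 y a p h (t + s * p), ← add_assoc, ← ih]

lemma exists_cycle {A Q : Type} [Fintype Q] (δ : Q → A → Q) (q0 : Q) (y : List A) :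
    ∃ a p : ℕ, a + p ≤ Fintype.card Q ∧ 1 ≤ p ∧
      dstar δ q0 (wrep y a) = dstar δ q0 (wrep y (a + p)) := by
  set m := Fintype.card Q
  obtain ⟨a, b, hab, heq⟩ := Fintype.exists_ne_map_eq_of_card_lt
    (fun k : Fin (m + 1) => dstar δ q0 (wrep y (k : ℕ))) (by simp [m])
  rcases lt_or_gt_of_ne hab with h | h
  · refine ⟨a, b - a, ?_, ?_, ?_⟩
    · have := b.isLt; omega
    · have : (a : ℕ) < b := h; omega
    · have e : (a : ℕ) + ((b : ℕ) - a) = b := by have : (a:ℕ) < b := h; omega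
      rw [e]; exact heq
  · refine ⟨b, a - b, ?_, ?_, ?_⟩
    · have := a.isLt; omega
    · have : (b : ℕ) < a := h; omega
    · have e : (b : ℕ) + ((a : ℕ) - b) = a := by have : (b:ℕ) < a := h; omega
      rw [e]; exact heq.symm

/-- normalization of ultimately periodic words in a pair of DFAs with
quadratic bounds. -/
theorem duo_normalization_exists {A QQ QP : Type} [Fintype QQ] [Fintype QP]
    (δQ : QQ → A → QQ) (qQ : QQ) (δP : QP → A → QP) (qP : QP)
    (x y : List A) (hy : y ≠ []) :
    ∃ i j : ℕ, i ≤ Fintype.card QQ ∧ 1 ≤ j ∧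
      j ≤ 2 * Fintype.card QQ * Fintype.card QP ∧
      dstar δQ qQ (x ++ wrep y i) = dstar δQ qQ (x ++ wrep y (i + j)) ∧
      dstar δP qP (wrep y j) = dstar δP qP (wrep y (2 * j)) := by
  classical
  have hm : 0 < Fintype.card QQ := Fintype.card_pos_iff.mpr ⟨qQ⟩
  have hn : 0 < Fintype.card QP := Fintype.card_pos_iff.mpr ⟨qP⟩
  set m := Fintype.card QQ with hmdef
  set n := Fintype.card QP with hndef
  set q1 := dstar δQ qQ x with hq1
  obtain ⟨a, p, hap, hp1, hQcyc⟩ := exists_cycle δQ q1 y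
  obtain ⟨a', q, haq, hq1', hPcyc⟩ := exists_cycle δP qP y
  obtain ⟨pq, hpq⟩ : ∃ z, z = p * q := ⟨_, rfl⟩
  obtain ⟨mn, hmn⟩ : ∃ z, z = m * n := ⟨_, rfl⟩
  have hpq0 : 0 < pq := by rw [hpq]; positivity
  have hpqmn : pq ≤ mn := by
    rw [hpq, hmn]; exact Nat.mul_le_mul (by omega) (by omega)
  have hnmn : n ≤ mn := by rw [hmn]; exact Nat.le_mul_of_pos_left _ hm
  have h2mn : 2 * m * n = 2 * mn := by rw [hmn]; ring
  obtain ⟨d, hd⟩ : ∃ z, z = a' / pq := ⟨_, rfl⟩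
  have hdm : pq * d + a' % pq = a' := by rw [hd]; exact Nat.div_add_mod a' pq
  have hr : a' % pq < pq := Nat.mod_lt _ hpq0
  set k := d + 1 with hk
  set j := pq * k with hj
  have hjeq : j = pq * d + pq := by rw [hj, hk]; ring
  have hj1 : 1 ≤ j := by omega
  have haj : a' < j := by omega
  have hjle : j ≤ 2 * m * n := by omega
  refine ⟨a, j, by omega, hj1, hjle, ?_, ?_⟩
  · rw [dstar_append', dstar_append', ← hq1]
    have key := cyc_iter δQ q1 y a p hQcyc 0 (q * k)
    have e : a + 0 + q * k * p = a + j := by rw [hj, hpq]; ring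
    rw [e] at key
    simpa using key
  · have key := cyc_iter δP qP y a' q hPcyc (j - a') (p * k)
    have e1 : a' + (j - a') = j := by omega
    have epk : p * k * q = j := by rw [hj, hpq]; ring
    have e2 : a' + (j - a') + p * k * q = 2 * j := by omega
    rw [e2] at key
    rw [e1] at key
    exact key
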